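/- Let f be a holomorphic self-map of the open unit disc 𝔻 whose Denjoy–Wolff point ζ lies on the boundary of 𝔻 (|ζ| = 1). Then there exist neighbourhoods 𝒰₁, 𝒰₂, … of f in the space of holomorphic self-maps of 𝔻 with the compact-open topology such that whenever fₙ ∈ 𝒰ₙ for all n, the left-composition sequence Fₙ = fₙ ∘ fₙ₋₁ ∘ ⋯ ∘ f₁ converges locally uniformly on 𝔻 to the constant ζ. -/

import Mathlib

open Complex Set Filter Metric
open scoped Topology

/-- The open unit disc in the complex plane. -/
def unitDisc : Set ℂ := {z : ℂ | ‖z‖ < 1}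

/-- Inverse hyperbolic tangent. -/
noncomputable def artanh (x : ℝ) : ℝ := (1 / 2) * Real.log ((1 + x) / (1 - x))

/-- The hyperbolic distance on the unit disc, induced by the Riemannian metric
`2|dz|/(1-|z|²)`. -/
noncomputable def hdist (z w : ℂ) : ℝ :=
  2 * artanh ‖(z - w) / (1 - (starRingEnd ℂ) w * z)‖

/-- Left compositions: `leftComp f n = f (n-1) ∘ ⋯ ∘ f 1 ∘ f 0`, so that `f k`
plays the role of the `(k+1)`-st map `f_{k+1}` of the sequence. -/
def leftComp (f : ℕ → ℂ → ℂ) : ℕ → ℂ → ℂ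
  | 0 => id
  | n + 1 => f n ∘ leftComp f n

/-- Right compositions: `rightComp g n = g 0 ∘ g 1 ∘ ⋯ ∘ g (n-1)`, so that `g k`
plays the role of the `(k+1)`-st map `g_{k+1}` of the sequence. -/
def rightComp (g : ℕ → ℂ → ℂ) : ℕ → ℂ → ℂ
  | 0 => id
  | n + 1 => rightComp g n ∘ g n

/-! ### Auxiliary material: the pseudo-hyperbolic distance on the unit disc -/

/-- The pseudo-hyperbolic distance. -/
noncomputable def pd (a b : ℂ) : ℝ := ‖(a - b) / (1 - (starRingEnd ℂ) b * a)‖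

/-- The Möbius transformation of the disc sending `b` to `0`. -/
noncomputable def mo (b z : ℂ) : ℂ := (z - b) / (1 - (starRingEnd ℂ) b * z)

lemma pd_nonneg (a b : ℂ) : 0 ≤ pd a b := norm_nonneg _

lemma den_lb (a b : ℂ) :
    1 - ‖b‖ * ‖a‖ ≤ ‖1 - (starRingEnd ℂ) b * a‖ := by
  have h1 : ‖(starRingEnd ℂ) b * a‖ = ‖b‖ * ‖a‖ := by
    rw [norm_mul, Complex.norm_conj]
  calc 1 - ‖b‖ * ‖a‖
      = ‖1‖ - ‖(starRingEnd ℂ) b * a‖ := by rw [h1]; simp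
    _ ≤ ‖1 - (starRingEnd ℂ) b * a‖ := norm_sub_norm_le _ _

lemma den_pos {a b : ℂ} (h : ‖b‖ * ‖a‖ < 1) :
    0 < ‖1 - (starRingEnd ℂ) b * a‖ :=
  lt_of_lt_of_le (by linarith) (den_lb a b)

lemma den_ne {a b : ℂ} (h : ‖b‖ * ‖a‖ < 1) :
    (1 - (starRingEnd ℂ) b * a) ≠ 0 := by
  intro h0
  have := den_pos h
  rw [h0] at this; simp at this

lemma prod_lt_one {a b : ℂ} (ha : ‖a‖ < 1) (hb : ‖b‖ ≤ 1) :
    ‖b‖ * ‖a‖ < 1 := by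
  nlinarith [norm_nonneg a, norm_nonneg b]

lemma key_identity (a b : ℂ) :
    Complex.normSq (1 - (starRingEnd ℂ) b * a) - Complex.normSq (a - b)
      = (1 - Complex.normSq a) * (1 - Complex.normSq b) := by
  have h : ((Complex.normSq (1 - (starRingEnd ℂ) b * a) - Complex.normSq (a - b) : ℝ) : ℂ)
      = ((1 - Complex.normSq a) * (1 - Complex.normSq b) : ℝ) := by
    push_cast
    rw [← Complex.mul_conj, ← Complex.mul_conj, ← Complex.mul_conj, ← Complex.mul_conj]
    simp only [map_sub, map_mul, map_one, Complex.conj_conj]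
    ring
  exact_mod_cast h

lemma pd_lt_one {a b : ℂ} (ha : ‖a‖ < 1) (hb : ‖b‖ < 1) :
    pd a b < 1 := by
  have hprod : ‖b‖ * ‖a‖ < 1 := prod_lt_one ha hb.le
  have hd := den_pos hprod
  have hkey := key_identity a b
  have hna : Complex.normSq a < 1 := by
    rw [← Complex.sq_norm]; nlinarith [norm_nonneg a]
  have hnb : Complex.normSq b < 1 := by
    rw [← Complex.sq_norm]; nlinarith [norm_nonneg b]
  have hlt : Complex.normSq (a - b) < Complex.normSq (1 - (starRingEnd ℂ) b * a) := by
    nlinarith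
  have habs : ‖a - b‖ < ‖1 - (starRingEnd ℂ) b * a‖ := by
    rw [Complex.norm_def, Complex.norm_def]
    exact Real.sqrt_lt_sqrt (Complex.normSq_nonneg _) hlt
  rw [pd, norm_div]
  exact (div_lt_one hd).2 habs

lemma pd_eq_div (a b : ℂ) :
    pd a b = ‖a - b‖ / ‖1 - (starRingEnd ℂ) b * a‖ := by
  rw [pd, norm_div]

lemma pd_zero_right (a : ℂ) : pd a 0 = ‖a‖ := by simp [pd]

lemma pd_self (a : ℂ) : pd a a = 0 := by simp [pd]

lemma abs_mo (b z : ℂ) : ‖mo b z‖ = pd z b := rfl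

lemma mo_mem {b z : ℂ} (hb : ‖b‖ < 1) (hz : ‖z‖ < 1) :
    ‖mo b z‖ < 1 := by rw [abs_mo]; exact pd_lt_one hz hb

lemma mo_zero {b : ℂ} : mo (-b) 0 = b := by simp [mo]

lemma mo_self (b : ℂ) : mo b b = 0 := by simp [mo]

lemma mo_inv {b z : ℂ} (hb : ‖b‖ < 1) (hz : ‖z‖ < 1) :
    mo (-b) (mo b z) = z := by
  have h1 : (1 - (starRingEnd ℂ) b * z) ≠ 0 := den_ne (prod_lt_one hz hb.le)
  have hn : Complex.normSq b < 1 := by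
    rw [← Complex.sq_norm]; nlinarith [norm_nonneg b]
  have h2 : (1 : ℂ) - b * (starRingEnd ℂ) b ≠ 0 := by
    rw [Complex.mul_conj, sub_ne_zero]
    exact fun h => hn.ne' (by exact_mod_cast h)
  rw [mo, mo, map_neg]
  have h1' : (1 - z * (starRingEnd ℂ) b) ≠ 0 := by rwa [mul_comm]
  field_simp
  rw [div_eq_iff (by
    rw [show (1 - z * (starRingEnd ℂ) b - -((z - b) * (starRingEnd ℂ) b))
        = 1 - b * (starRingEnd ℂ) b from by ring]
    exact h2)]
  ring

lemma mo_diff {b : ℂ} (hb : ‖b‖ < 1) :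
    DifferentiableOn ℂ (mo b) (ball 0 1) := by
  apply DifferentiableOn.div
  · exact (differentiable_id.sub_const b).differentiableOn
  · exact ((differentiable_const (1:ℂ)).sub
      ((differentiable_const _).mul differentiable_id)).differentiableOn
  · intro z hz
    rw [mem_ball, dist_zero_right] at hz
    exact den_ne (prod_lt_one (by simpa using hz) hb.le)

/-- The Schwarz–Pick lemma for the pseudo-hyperbolic distance. -/
lemma schwarz_pick {f : ℂ → ℂ} (hd : DifferentiableOn ℂ f (ball 0 1))
    (hm : MapsTo f (ball 0 1) (ball 0 1)) {a b : ℂ}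
    (ha : ‖a‖ < 1) (hb : ‖b‖ < 1) :
    pd (f a) (f b) ≤ pd a b := by
  have hball : ∀ z : ℂ, z ∈ ball (0:ℂ) 1 ↔ ‖z‖ < 1 := by
    intro z; rw [mem_ball, dist_zero_right]
  have hfb : ‖f b‖ < 1 := (hball _).1 (hm ((hball b).2 hb))
  set g : ℂ → ℂ := fun z => mo (f b) (f (mo (-b) z)) with hg
  have hmb : ‖-b‖ < 1 := by rwa [norm_neg]
  have hgd : DifferentiableOn ℂ g (ball 0 1) := by
    apply DifferentiableOn.comp (mo_diff hfb)
      (DifferentiableOn.comp hd (mo_diff hmb) ?_) ?_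
    · intro z hz
      exact (hball _).2 (mo_mem hmb ((hball _).1 hz))
    · intro z hz
      exact hm ((hball _).2 (mo_mem hmb ((hball _).1 hz)))
  have hgm : MapsTo g (ball 0 1) (ball 0 1) := by
    intro z hz
    exact (hball _).2 (mo_mem hfb ((hball _).1
      (hm ((hball _).2 (mo_mem hmb ((hball _).1 hz))))))
  have hg0 : g 0 = 0 := by
    rw [hg]; simp only [mo_zero, mo_self]
  have hw : ‖mo b a‖ < 1 := mo_mem hb ha
  have := Complex.norm_le_norm_of_mapsTo_ball hgd (hgm.mono_right ball_subset_closedBall) hg0 hw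
  rw [hg] at this
  simp only [mo_inv hb ha] at this
  rwa [abs_mo, abs_mo] at this

lemma normSq_lt_one {b : ℂ} (hb : ‖b‖ < 1) : Complex.normSq b < 1 := by
  rw [← Complex.sq_norm]; nlinarith [norm_nonneg b]

lemma abs_one_sub_conj_mul_self (b : ℂ) (hb : ‖b‖ ≤ 1) :
    ‖1 - b * (starRingEnd ℂ) b‖ = 1 - Complex.normSq b := by
  have h1 : Complex.normSq b ≤ 1 := by
    rw [← Complex.sq_norm]; nlinarith [norm_nonneg b]
  rw [Complex.mul_conj]
  rw [show (1 : ℂ) - (Complex.normSq b : ℂ) = ((1 - Complex.normSq b : ℝ) : ℂ) by push_cast; ring]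
  rw [Complex.norm_real, Real.norm_eq_abs]
  rw [_root_.abs_of_nonneg (by linarith : (0:ℝ) ≤ 1 - Complex.normSq b)]

/-- Weak triangle inequality for the pseudo-hyperbolic distance. -/
lemma pd_triangle {a b c : ℂ} (ha : ‖a‖ < 1) (hb : ‖b‖ < 1)
    (hc : ‖c‖ < 1) :
    pd a c * (1 - pd a b * pd b c) ≤ pd a b + pd b c := by
  set A := ‖a - c‖ with hAdef
  set U := ‖a - b‖ with hUdef
  set V := ‖b - c‖ with hVdef
  set P := ‖1 - (starRingEnd ℂ) c * a‖ with hPdef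
  set Q := ‖1 - (starRingEnd ℂ) b * a‖ with hQdef
  set R := ‖1 - (starRingEnd ℂ) c * b‖ with hRdef
  have hP : 0 < P := den_pos (prod_lt_one ha hc.le)
  have hQ : 0 < Q := den_pos (prod_lt_one ha hb.le)
  have hR : 0 < R := den_pos (prod_lt_one hb hc.le)
  have hA : 0 ≤ A := norm_nonneg _
  have hU : 0 ≤ U := norm_nonneg _
  have hV : 0 ≤ V := norm_nonneg _
  have hRR : ‖1 - (starRingEnd ℂ) b * c‖ = R := by
    rw [hRdef, ← Complex.norm_conj (1 - (starRingEnd ℂ) c * b)]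
    congr 1
    simp only [map_sub, map_one, map_mul, Complex.conj_conj]
    ring
  have hm : ‖1 - b * (starRingEnd ℂ) b‖ = 1 - Complex.normSq b :=
    abs_one_sub_conj_mul_self b hb.le
  have id1 : (a - c) * (1 - b * (starRingEnd ℂ) b)
      = (a - b) * (1 - (starRingEnd ℂ) b * c) + (b - c) * (1 - (starRingEnd ℂ) b * a) := by
    ring
  have f1 : A * (1 - Complex.normSq b) ≤ U * R + V * Q := by
    have h := congrArg norm id1
    rw [norm_mul, hm] at h
    have hle := norm_add_le ((a - b) * (1 - (starRingEnd ℂ) b * c))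
      ((b - c) * (1 - (starRingEnd ℂ) b * a))
    rw [norm_mul, norm_mul, hRR, ← h] at hle
    exact hle
  have id2 : (1 - (starRingEnd ℂ) c * a) * (1 - b * (starRingEnd ℂ) b)
      = (1 - (starRingEnd ℂ) c * b) * (1 - (starRingEnd ℂ) b * a)
        - ((starRingEnd ℂ) c - (starRingEnd ℂ) b) * (a - b) := by
    ring
  have f2 : Q * R - V * U ≤ P * (1 - Complex.normSq b) := by
    have h := congrArg norm id2
    rw [norm_mul, hm] at h
    have hle := norm_sub_norm_le ((1 - (starRingEnd ℂ) c * b) * (1 - (starRingEnd ℂ) b * a))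
      (((starRingEnd ℂ) c - (starRingEnd ℂ) b) * (a - b))
    rw [← h, norm_mul, norm_mul] at hle
    have h4 : ‖(starRingEnd ℂ) c - (starRingEnd ℂ) b‖ = V := by
      rw [← map_sub, Complex.norm_conj, norm_sub_rev]
    rw [h4] at hle
    linarith [hle]
  have key : A * (Q * R - U * V) ≤ (U * R + V * Q) * P := by
    rcases le_or_gt (Q * R - U * V) 0 with h | h
    · have h5 : A * (Q * R - U * V) ≤ 0 := mul_nonpos_of_nonneg_of_nonpos hA h
      nlinarith
    · have step1 : A * (Q * R - U * V) ≤ A * (P * (1 - Complex.normSq b)) := by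
        apply mul_le_mul_of_nonneg_left _ hA
        calc Q * R - U * V = Q * R - V * U := by ring
          _ ≤ P * (1 - Complex.normSq b) := f2
      calc A * (Q * R - U * V) ≤ A * (P * (1 - Complex.normSq b)) := step1
        _ = P * (A * (1 - Complex.normSq b)) := by ring
        _ ≤ P * (U * R + V * Q) := mul_le_mul_of_nonneg_left f1 hP.le
        _ = (U * R + V * Q) * P := by ring
  have e1 : pd a c = A / P := pd_eq_div a c
  have e2 : pd a b = U / Q := pd_eq_div a b
  have e3 : pd b c = V / R := pd_eq_div b c
  rw [e1, e2, e3]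
  rw [div_add_div _ _ hQ.ne' hR.ne']
  rw [show (1 : ℝ) - U / Q * (V / R) = (Q * R - U * V) / (Q * R) by field_simp]
  rw [div_mul_div_comm, div_le_div_iff₀ (by positivity) (by positivity)]
  calc A * (Q * R - U * V) * (Q * R) ≤ (U * R + V * Q) * P * (Q * R) :=
        mul_le_mul_of_nonneg_right key (by positivity)
    _ = (U * R + Q * V) * (P * (Q * R)) := by ring

/-- Euclidean distance bound from pseudo-hyperbolic bound. -/
lemma abs_sub_le_of_pd {a b : ℂ} {β : ℝ} (ha : ‖a‖ < 1) (hb : ‖b‖ < 1)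
    (hβ : β < 1) (h : pd a b ≤ β) :
    ‖a - b‖ ≤ β * (1 - Complex.normSq b) / (1 - β) := by
  have hβ0 : 0 ≤ β := le_trans (pd_nonneg a b) h
  have hD : 0 < ‖1 - (starRingEnd ℂ) b * a‖ := den_pos (prod_lt_one ha hb.le)
  have habs : ‖a - b‖ = pd a b * ‖1 - (starRingEnd ℂ) b * a‖ := by
    rw [pd_eq_div, div_mul_cancel₀ _ hD.ne']
  have hDle : ‖1 - (starRingEnd ℂ) b * a‖
      ≤ (1 - Complex.normSq b) + ‖b‖ * ‖a - b‖ := by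
    have idd : (1 : ℂ) - (starRingEnd ℂ) b * a
        = (1 - b * (starRingEnd ℂ) b) + (starRingEnd ℂ) b * (b - a) := by ring
    calc ‖1 - (starRingEnd ℂ) b * a‖
        = ‖(1 - b * (starRingEnd ℂ) b) + (starRingEnd ℂ) b * (b - a)‖ := by
          rw [← idd]
      _ ≤ ‖1 - b * (starRingEnd ℂ) b‖ + ‖(starRingEnd ℂ) b * (b - a)‖ :=
          norm_add_le _ _
      _ = (1 - Complex.normSq b) + ‖b‖ * ‖a - b‖ := by
          rw [abs_one_sub_conj_mul_self b hb.le, norm_mul, Complex.norm_conj,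
            norm_sub_rev b a]
  have h1 : ‖a - b‖
      ≤ β * ((1 - Complex.normSq b) + ‖b‖ * ‖a - b‖) := by
    calc ‖a - b‖ = pd a b * ‖1 - (starRingEnd ℂ) b * a‖ := habs
      _ ≤ β * ‖1 - (starRingEnd ℂ) b * a‖ := mul_le_mul_of_nonneg_right h hD.le
      _ ≤ β * ((1 - Complex.normSq b) + ‖b‖ * ‖a - b‖) :=
          mul_le_mul_of_nonneg_left hDle hβ0
  have hb1 : ‖b‖ ≤ 1 := hb.le
  have hE : 0 ≤ ‖a - b‖ := norm_nonneg _
  rw [le_div_iff₀ (by linarith)]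
  nlinarith [mul_le_mul_of_nonneg_left hb1 hβ0]

/-- **Theorem 5: stability at a map with Denjoy–Wolff point on the boundary, left
compositions.** The Denjoy–Wolff hypothesis is encoded by |ζ| = 1 together with locally
uniform convergence of the iterates `f^[n]` to the constant ζ. The neighbourhoods 𝒰ₙ of
f in the compact-open topology are encoded by basic compact-open neighbourhoods, given by
compact sets K n ⊆ 𝔻 and radii ε n > 0. -/
theorem stability_DW_boundary_left
    (f : ℂ → ℂ) (ζ : ℂ)
    (hf : DifferentiableOn ℂ f unitDisc) (hfmap : MapsTo f unitDisc unitDisc)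
    (hζ : ‖ζ‖ = 1)
    (hDW : TendstoLocallyUniformlyOn (fun n z => f^[n] z) (fun _ => ζ) atTop unitDisc) :
    ∃ K : ℕ → Set ℂ, ∃ ε : ℕ → ℝ,
      (∀ n, IsCompact (K n) ∧ K n ⊆ unitDisc ∧ 0 < ε n) ∧
      ∀ fseq : ℕ → ℂ → ℂ,
        (∀ n, DifferentiableOn ℂ (fseq n) unitDisc ∧ MapsTo (fseq n) unitDisc unitDisc ∧
          ∀ z ∈ K n, dist (fseq n z) (f z) < ε n) →
        TendstoLocallyUniformlyOn (leftComp fseq) (fun _ => ζ) atTop unitDisc := by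
  have hU : unitDisc = Metric.ball (0:ℂ) 1 := by
    ext z; simp [unitDisc, Metric.mem_ball, Complex.dist_eq]
  have h0mem : (0:ℂ) ∈ unitDisc := by simp [unitDisc]
  have hf' : DifferentiableOn ℂ f (ball 0 1) := hU ▸ hf
  have hfmap' : MapsTo f (ball 0 1) (ball 0 1) := hU ▸ hfmap
  set o : ℕ → ℂ := fun n => f^[n] 0 with hodef
  have hoD : ∀ n, o n ∈ unitDisc := fun n => hfmap.iterate n h0mem
  have hoabs : ∀ n, ‖o n‖ < 1 := fun n => hoD n
  have hoζ : Tendsto o atTop (𝓝 ζ) := hDW.tendsto_at h0mem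
  -- the compact sets and radii
  set R : ℕ → ℝ := fun n => ‖o n‖ + (1 - Complex.normSq (o n)) / 3 with hRdef
  have hR1 : ∀ n, R n < 1 := by
    intro n
    have h1 := hoabs n
    have h2 : Complex.normSq (o n) = ‖o n‖ ^ 2 := (Complex.sq_norm _).symm
    have h3 := norm_nonneg (o n)
    rw [hRdef]
    simp only
    nlinarith
  have hR0 : ∀ n, 0 ≤ R n := by
    intro n
    have h2 : Complex.normSq (o n) = ‖o n‖ ^ 2 := (Complex.sq_norm _).symm
    have h3 := norm_nonneg (o n)
    have h1 := hoabs n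
    rw [hRdef]; simp only
    nlinarith
  have hKsub : ∀ n, Metric.closedBall (0:ℂ) (R n) ⊆ unitDisc := by
    intro n
    rw [hU]
    exact closedBall_subset_ball (hR1 n)
  -- bound for f on the compact sets
  have hs : ∀ n, ∃ s, 0 ≤ s ∧ s < 1 ∧
      ∀ a ∈ Metric.closedBall (0:ℂ) (R n), ‖f a‖ ≤ s := by
    intro n
    have hne : (Metric.closedBall (0:ℂ) (R n)).Nonempty :=
      ⟨0, by simpa using hR0 n⟩
    have hcont : ContinuousOn (fun a => ‖f a‖) (Metric.closedBall (0:ℂ) (R n)) :=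
      continuous_norm.comp_continuousOn (hf.continuousOn.mono (hKsub n))
    obtain ⟨a0, ha0, hmax⟩ := (isCompact_closedBall (0:ℂ) (R n)).exists_isMaxOn hne hcont
    refine ⟨‖f a0‖, norm_nonneg _, ?_, fun a ha => hmax ha⟩
    exact hfmap (hKsub n ha0)
  choose s hs0 hs1 hs2 using hs
  set δ : ℕ → ℝ := fun n => (1/2 : ℝ)^n * (1/16) with hδdef
  have hδpos : ∀ n, 0 < δ n := by intro n; rw [hδdef]; positivity
  refine ⟨fun n => Metric.closedBall (0:ℂ) (R n), fun n => δ n * (1 - s n) / 2, ?_, ?_⟩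
  · intro n
    exact ⟨isCompact_closedBall _ _, hKsub n, div_pos (mul_pos (hδpos n) (by linarith [hs1 n])) two_pos⟩
  intro fseq hyp
  -- basic facts about the compositions
  have hFmap : ∀ n, MapsTo (leftComp fseq n) unitDisc unitDisc := by
    intro n
    induction n with
    | zero => exact fun z hz => hz
    | succ n ih => exact fun z hz => (hyp n).2.1 (ih hz)
  have hFabs : ∀ n z, z ∈ unitDisc → ‖leftComp fseq n z‖ < 1 :=
    fun n z hz => hFmap n hz
  -- perturbation estimate
  have hpert : ∀ n (w : ℂ), w ∈ Metric.closedBall (0:ℂ) (R n) →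
      pd (fseq n w) (f w) ≤ δ n := by
    intro n w hw
    have hfw : ‖f w‖ ≤ s n := hs2 n w hw
    have hfw0 : 0 ≤ ‖f w‖ := norm_nonneg _
    have hfsw : ‖fseq n w‖ < 1 := (hyp n).2.1 (hKsub n hw)
    have hfsw0 : 0 ≤ ‖fseq n w‖ := norm_nonneg _
    have hdd : ‖fseq n w - f w‖ < δ n * (1 - s n) / 2 := by
      have h := (hyp n).2.2 w hw
      rwa [Complex.dist_eq] at h
    have hden : 1 - s n ≤ ‖1 - (starRingEnd ℂ) (f w) * fseq n w‖ := by
      calc 1 - s n ≤ 1 - ‖f w‖ * ‖fseq n w‖ := by nlinarith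
        _ ≤ _ := den_lb _ _
    have hsn1 : 0 < 1 - s n := by have := hs1 n; linarith
    rw [pd_eq_div, div_le_iff₀ (lt_of_lt_of_le hsn1 hden)]
    have hδn := hδpos n
    calc ‖fseq n w - f w‖ ≤ δ n * (1 - s n) / 2 := hdd.le
      _ ≤ δ n * (1 - s n) := by nlinarith
      _ ≤ δ n * ‖1 - (starRingEnd ℂ) (f w) * fseq n w‖ := by
          exact mul_le_mul_of_nonneg_left hden hδn.le
  -- the key invariant along the orbit of 0
  have main : ∀ n, pd (leftComp fseq n 0) (o n) ≤ 1/4 - (1/2:ℝ)^n * (1/4) := by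
    intro n
    induction n with
    | zero =>
      have h1 : leftComp fseq 0 0 = (0:ℂ) := rfl
      have h2 : o 0 = 0 := rfl
      rw [h1, h2, pd_self]
      norm_num
    | succ n ih =>
      set w := leftComp fseq n 0 with hwdef
      have hwD : w ∈ unitDisc := hFmap n h0mem
      have hwabs : ‖w‖ < 1 := hwD
      have hβ : pd w (o n) ≤ 1/4 := le_trans ih (by
        have : (0:ℝ) < (1/2:ℝ)^n := by positivity
        linarith)
      have hwo : ‖w - o n‖ ≤ (1 - Complex.normSq (o n)) / 3 := by
        have h := abs_sub_le_of_pd hwabs (hoabs n) (by norm_num : (1/4:ℝ) < 1) hβ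
        calc ‖w - o n‖ ≤ 1/4 * (1 - Complex.normSq (o n)) / (1 - 1/4) := h
          _ = (1 - Complex.normSq (o n)) / 3 := by ring
      have hwK : w ∈ Metric.closedBall (0:ℂ) (R n) := by
        rw [Metric.mem_closedBall, dist_zero_right]
        have h5 : ‖w‖ - ‖o n‖ ≤ ‖w - o n‖ :=
          norm_sub_norm_le w (o n)
        rw [hRdef]
        simp only
        linarith
      have hu : pd (fseq n w) (f w) ≤ δ n := hpert n w hwK
      have hfwD : f w ∈ unitDisc := hfmap hwD
      have hfwabs : ‖f w‖ < 1 := hfwD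
      have haD : ‖fseq n w‖ < 1 := hFabs (n+1) 0 h0mem
      have hosucc : o (n+1) = f (o n) := Function.iterate_succ_apply' f n 0
      have hv : pd (f w) (o (n+1)) ≤ 1/4 - (1/2:ℝ)^n * (1/4) := by
        rw [hosucc]
        exact le_trans (schwarz_pick hf' hfmap' hwabs (hoabs n)) ih
      have honabs : ‖o (n+1)‖ < 1 := hoabs (n+1)
      have htri := pd_triangle haD hfwabs honabs
      have hu0 := pd_nonneg (fseq n w) (f w)
      have hv0 := pd_nonneg (f w) (o (n+1))
      have hp0 := pd_nonneg (fseq n w) (o (n+1))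
      have hp1 : pd (fseq n w) (o (n+1)) < 1 := pd_lt_one haD honabs
      have ht0 : (0:ℝ) < (1/2:ℝ)^n := by positivity
      have ht1 : (1/2:ℝ)^n ≤ 1 := by
        apply pow_le_one₀ <;> norm_num
      have hδeq : δ n = (1/2:ℝ)^n * (1/16) := rfl
      have hgoal : pd (fseq n w) (o (n+1)) ≤ 1/4 - (1/2:ℝ)^(n+1) * (1/4) := by
        rw [hδeq] at hu
        have hsucc : ((1/2:ℝ))^(n+1) = (1/2:ℝ)^n * (1/2) := pow_succ _ _
        rw [hsucc]
        nlinarith [mul_le_mul hu hv hv0 (by positivity : (0:ℝ) ≤ (1/2:ℝ)^n * (1/16)),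
          mul_nonneg hu0 hv0]
      exact hgoal
  -- contraction of the compositions
  have hcontr : ∀ n (z : ℂ), ‖z‖ < 1 →
      pd (leftComp fseq n z) (leftComp fseq n 0) ≤ ‖z‖ := by
    intro n z hz
    induction n with
    | zero =>
      have : leftComp fseq 0 z = z := rfl
      rw [this, show leftComp fseq 0 0 = (0:ℂ) from rfl, pd_zero_right]
    | succ n ih =>
      have h1 : leftComp fseq (n+1) z = fseq n (leftComp fseq n z) := rfl
      have h2 : leftComp fseq (n+1) 0 = fseq n (leftComp fseq n 0) := rfl
      rw [h1, h2]
      have hd' : DifferentiableOn ℂ (fseq n) (ball 0 1) := hU ▸ (hyp n).1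
      have hm' : MapsTo (fseq n) (ball 0 1) (ball 0 1) := hU ▸ (hyp n).2.1
      have hza : ‖leftComp fseq n z‖ < 1 := hFabs n z (by rwa [show z ∈ unitDisc ↔ ‖z‖ < 1 from Iff.rfl])
      have h0a : ‖leftComp fseq n 0‖ < 1 := hFabs n 0 h0mem
      exact le_trans (schwarz_pick hd' hm' hza h0a) ih
  -- the limit statements
  have h1lim : Tendsto (fun n => 1 - ‖o n‖) atTop (𝓝 0) := by
    have h := (continuous_norm.tendsto ζ).comp hoζ
    rw [hζ] at h
    have h2 : Tendsto (fun n => (1:ℝ) - ‖o n‖) atTop (𝓝 (1 - 1)) :=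
      (tendsto_const_nhds (x := (1:ℝ))).sub h
    simpa using h2
  have h2lim : Tendsto (fun n => ‖o n - ζ‖) atTop (𝓝 0) := by
    have h : Tendsto (fun n => o n - ζ) atTop (𝓝 (ζ - ζ)) := hoζ.sub tendsto_const_nhds
    rw [sub_self] at h
    have := (continuous_norm.tendsto 0).comp h
    simpa [Function.comp_def] using this
  -- conclusion: locally uniform convergence
  rw [hU]
  rw [tendstoLocallyUniformlyOn_iff_forall_isCompact isOpen_ball]
  intro Kc hKc hKcomp
  rcases Kc.eq_empty_or_nonempty with hKe | hKne
  · subst hKe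
    rw [Metric.tendstoUniformlyOn_iff]
    intro e he
    filter_upwards with n z hz
    exact absurd hz (notMem_empty z)
  obtain ⟨z0, hz0K, hmax⟩ := hKcomp.exists_isMaxOn hKne continuous_norm.continuousOn
  set r : ℝ := ‖z0‖ with hrdef
  have hr1 : r < 1 := by
    have := hKc hz0K
    rwa [mem_ball, dist_zero_right] at this
  have hr0 : 0 ≤ r := norm_nonneg _
  set C : ℝ := 4 * r / (1 - r) + 1 with hCdef
  have hC0 : 0 ≤ C := by
    have h1r : (0:ℝ) < 1 - r := by linarith
    have : 0 ≤ 4 * r / (1 - r) := div_nonneg (by linarith) h1r.le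
    rw [hCdef]; linarith
  have hElim : Tendsto (fun n => C * (1 - ‖o n‖) + ‖o n - ζ‖)
      atTop (𝓝 0) := by
    have h3 : Tendsto (fun n => C * (1 - ‖o n‖) + ‖o n - ζ‖)
        atTop (𝓝 (C * 0 + 0)) :=
      ((tendsto_const_nhds (x := C)).mul h1lim).add h2lim
    simpa using h3
  rw [Metric.tendstoUniformlyOn_iff]
  intro e he
  filter_upwards [hElim.eventually_lt_const he] with n hn z hz
  -- the three error terms
  have hzD : z ∈ unitDisc := by rw [hU]; exact hKc hz
  have hzabs : ‖z‖ < 1 := hzD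
  have hzr : ‖z‖ ≤ r := hmax hz
  have hF0abs : ‖leftComp fseq n 0‖ < 1 := hFabs n 0 h0mem
  have hFzabs : ‖leftComp fseq n z‖ < 1 := hFabs n z hzD
  have hβ : pd (leftComp fseq n 0) (o n) ≤ 1/4 := le_trans (main n) (by
    have : (0:ℝ) < (1/2:ℝ)^n := by positivity
    linarith)
  have d2 : ‖leftComp fseq n 0 - o n‖ ≤ (1 - Complex.normSq (o n)) / 3 := by
    have h := abs_sub_le_of_pd hF0abs (hoabs n) (by norm_num : (1/4:ℝ) < 1) hβ
    calc ‖leftComp fseq n 0 - o n‖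
        ≤ 1/4 * (1 - Complex.normSq (o n)) / (1 - 1/4) := h
      _ = (1 - Complex.normSq (o n)) / 3 := by ring
  have hnso : 1 - Complex.normSq (o n) ≤ 2 * (1 - ‖o n‖) := by
    have h2 : Complex.normSq (o n) = ‖o n‖ ^ 2 := (Complex.sq_norm _).symm
    nlinarith [norm_nonneg (o n), (hoabs n).le]
  have d2' : ‖leftComp fseq n 0 - o n‖ ≤ (1 - ‖o n‖) := by
    calc ‖leftComp fseq n 0 - o n‖ ≤ (1 - Complex.normSq (o n)) / 3 := d2
      _ ≤ 2 * (1 - ‖o n‖) / 3 := by linarith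
      _ ≤ (1 - ‖o n‖) := by
          have := (hoabs n).le; linarith
  have hF0lb : 1 - ‖leftComp fseq n 0‖ ≤ 2 * (1 - ‖o n‖) := by
    have h5 : ‖o n‖ - ‖leftComp fseq n 0‖
        ≤ ‖o n - leftComp fseq n 0‖ := norm_sub_norm_le _ _
    rw [norm_sub_rev] at h5
    linarith
  have hrpd : pd (leftComp fseq n z) (leftComp fseq n 0) ≤ r :=
    le_trans (hcontr n z hzabs) hzr
  have d1 : ‖leftComp fseq n z - leftComp fseq n 0‖
      ≤ r * (1 - Complex.normSq (leftComp fseq n 0)) / (1 - r) :=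
    abs_sub_le_of_pd hFzabs hF0abs hr1 hrpd
  have hnsF : 1 - Complex.normSq (leftComp fseq n 0) ≤ 4 * (1 - ‖o n‖) := by
    have h2 : Complex.normSq (leftComp fseq n 0) = ‖leftComp fseq n 0‖ ^ 2 :=
      (Complex.sq_norm _).symm
    nlinarith [norm_nonneg (leftComp fseq n 0), hF0abs.le]
  have d1' : ‖leftComp fseq n z - leftComp fseq n 0‖
      ≤ 4 * r / (1 - r) * (1 - ‖o n‖) := by
    have h1r : 0 < 1 - r := by linarith
    calc ‖leftComp fseq n z - leftComp fseq n 0‖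
        ≤ r * (1 - Complex.normSq (leftComp fseq n 0)) / (1 - r) := d1
      _ ≤ r * (4 * (1 - ‖o n‖)) / (1 - r) := by
          gcongr
      _ = 4 * r / (1 - r) * (1 - ‖o n‖) := by ring
  -- total bound
  have htotal : ‖leftComp fseq n z - ζ‖
      ≤ C * (1 - ‖o n‖) + ‖o n - ζ‖ := by
    have tri : ‖leftComp fseq n z - ζ‖
        ≤ ‖leftComp fseq n z - leftComp fseq n 0‖
          + ‖leftComp fseq n 0 - o n‖ + ‖o n - ζ‖ := by
      calc ‖leftComp fseq n z - ζ‖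
          = ‖(leftComp fseq n z - leftComp fseq n 0)
              + ((leftComp fseq n 0 - o n) + (o n - ζ))‖ := by ring_nf
        _ ≤ ‖leftComp fseq n z - leftComp fseq n 0‖
              + ‖(leftComp fseq n 0 - o n) + (o n - ζ)‖ := norm_add_le _ _
        _ ≤ ‖leftComp fseq n z - leftComp fseq n 0‖
              + (‖leftComp fseq n 0 - o n‖ + ‖o n - ζ‖) := by
            have := norm_add_le (leftComp fseq n 0 - o n) (o n - ζ)
            linarith
        _ = _ := by ring
    rw [hCdef]
    calc ‖leftComp fseq n z - ζ‖
        ≤ ‖leftComp fseq n z - leftComp fseq n 0‖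
          + ‖leftComp fseq n 0 - o n‖ + ‖o n - ζ‖ := tri
      _ ≤ 4 * r / (1 - r) * (1 - ‖o n‖) + (1 - ‖o n‖)
          + ‖o n - ζ‖ := by linarith [d1', d2']
      _ = (4 * r / (1 - r) + 1) * (1 - ‖o n‖) + ‖o n - ζ‖ := by ring
  rw [Complex.dist_eq]
  calc ‖ζ - leftComp fseq n z‖ = ‖leftComp fseq n z - ζ‖ :=
        norm_sub_rev _ _
    _ ≤ C * (1 - ‖o n‖) + ‖o n - ζ‖ := htotal
    _ < e := hn
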